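/- arXiv:math-ph/0503056 — 3 statements merged into one kernel-verified Lean document; each statement's English description precedes it below -/
import Mathlib

section
/- Let A and B be nonnegative n×n real matrices with A_{ij} ≤ B_{ij} entrywise. Suppose B is irreducible (some power of B has all entries strictly positive) and there is at least one pair (i,j) with A_{ij} < B_{ij}. Then the spectral radius of A is strictly less than the spectral radius of B. -/
/-- Spectral radius of a complex square matrix: supremum of absolute values
of its eigenvalues (elements of the spectrum). -/
noncomputable def specRad {n : ℕ} (M : Matrix (Fin n) (Fin n) ℂ) : ℝ :=
  sSup ((fun μ : ℂ => ‖μ‖) '' spectrum ℂ M)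

open Matrix Filter
open scoped ENNReal NNReal Topology

namespace SpecRadAux

attribute [local instance] Matrix.linftyOpNormedRing Matrix.linftyOpNormedAlgebra

variable {n : ℕ}

/-- entries of powers of a nonnegative matrix are nonnegative -/
lemma pow_entry_nonneg {B : Matrix (Fin n) (Fin n) ℝ} (hB : ∀ i j, 0 ≤ B i j) :
    ∀ m i j, 0 ≤ (B ^ m) i j := by
  intro m
  induction m with
  | zero => intro i j; simp [Matrix.one_apply]; positivity
  | succ m ih =>
    intro i j
    rw [pow_succ, Matrix.mul_apply]
    exact Finset.sum_nonneg fun l _ => mul_nonneg (ih i l) (hB l j)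

lemma mulVec_nonneg {M : Matrix (Fin n) (Fin n) ℝ} (hM : ∀ i j, 0 ≤ M i j)
    {y : Fin n → ℝ} (hy : ∀ i, 0 ≤ y i) : ∀ i, 0 ≤ (M *ᵥ y) i := by
  intro i
  simp only [Matrix.mulVec, dotProduct]
  exact Finset.sum_nonneg fun j _ => mul_nonneg (hM i j) (hy j)

/-- if some entry of the vector is positive and the matrix has positive entries in that
column's row sums, a single-term bound -/
lemma mulVec_pos {M : Matrix (Fin n) (Fin n) ℝ} (hM : ∀ i j, 0 ≤ M i j)
    {y : Fin n → ℝ} (hy : ∀ i, 0 ≤ y i) {i j0 : Fin n} (h1 : 0 < M i j0) (h2 : 0 < y j0) :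
    0 < (M *ᵥ y) i := by
  have : 0 < M i j0 * y j0 := mul_pos h1 h2
  exact lt_of_lt_of_le this
    (Finset.single_le_sum (f := fun j => M i j * y j)
      (fun j _ => mul_nonneg (hM i j) (hy j)) (Finset.mem_univ j0))

lemma pow_mulVec_ge {B : Matrix (Fin n) (Fin n) ℝ} (hB : ∀ i j, 0 ≤ B i j)
    {y : Fin n → ℝ} (hy : ∀ i, 0 ≤ y i) {t : ℝ} (ht : 0 ≤ t)
    (h : ∀ i, t * y i ≤ (B *ᵥ y) i) :
    ∀ m i, t ^ m * y i ≤ ((B ^ m) *ᵥ y) i := by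
  intro m
  induction m with
  | zero => intro i; simp [Matrix.one_mulVec]
  | succ m ih =>
    intro i
    have hpow : B ^ (m + 1) = B * B ^ m := pow_succ' B m
    rw [hpow, ← Matrix.mulVec_mulVec]
    have step1 : ∀ j, t ^ m * y j ≤ ((B ^ m) *ᵥ y) j := ih
    calc t ^ (m + 1) * y i = t ^ m * (t * y i) := by ring
      _ ≤ t ^ m * (B *ᵥ y) i := by
          exact mul_le_mul_of_nonneg_left (h i) (pow_nonneg ht m)
      _ = ∑ j, B i j * (t ^ m * y j) := by
          rw [Matrix.mulVec, dotProduct, Finset.mul_sum]; congr 1; ext j; ring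
      _ ≤ ∑ j, B i j * (((B ^ m) *ᵥ y) j) := by
          refine Finset.sum_le_sum fun j _ => mul_le_mul_of_nonneg_left (step1 j) (hB i j)
      _ = (B *ᵥ ((B ^ m) *ᵥ y)) i := rfl

lemma map_pow_ofReal (B : Matrix (Fin n) (Fin n) ℝ) (m : ℕ) :
    (B.map (fun x => (x : ℂ))) ^ m = (B ^ m).map (fun x => (x : ℂ)) := by
  have := (Complex.ofRealHom.mapMatrix (m := Fin n)).map_pow B m
  exact this.symm

lemma mulVec_map_ofReal (M : Matrix (Fin n) (Fin n) ℝ) (y : Fin n → ℝ) (i : Fin n) :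
    ((M.map (fun x => (x : ℂ))) *ᵥ (fun j => (y j : ℂ))) i = ((M *ᵥ y) i : ℂ) := by
  simp [Matrix.mulVec, dotProduct, Matrix.map_apply]

/-- Collatz–Wielandt style lower bound for the spectral radius via Gelfand's formula. -/
lemma cw_le (B : Matrix (Fin n) (Fin n) ℝ) (hB : ∀ i j, 0 ≤ B i j)
    {y : Fin n → ℝ} (hy : ∀ i, 0 ≤ y i) {i0 : Fin n} (hy0 : 0 < y i0)
    {t : ℝ} (ht : 0 ≤ t) (h : ∀ i, t * y i ≤ (B *ᵥ y) i) :
    ENNReal.ofReal t ≤ spectralRadius ℂ (B.map (fun x => (x : ℂ))) := by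
  set B' := B.map (fun x => (x : ℂ)) with hB'
  set y' : Fin n → ℂ := fun j => (y j : ℂ) with hy'
  have hy'ne : y' ≠ 0 := by
    intro hcontra
    have : y' i0 = 0 := congrFun hcontra i0
    simp only [hy'] at this
    exact absurd (Complex.ofReal_eq_zero.mp this) (ne_of_gt hy0)
  have hy'norm : 0 < ‖y'‖ := norm_pos_iff.mpr hy'ne
  set c : ℝ := y i0 / ‖y'‖ with hc
  have hcpos : 0 < c := div_pos hy0 hy'norm
  -- key norm bound
  have key : ∀ m : ℕ, c * t ^ m ≤ ‖B' ^ m‖ := by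
    intro m
    have h1 : t ^ m * y i0 ≤ ((B ^ m) *ᵥ y) i0 := pow_mulVec_ge hB hy ht h m i0
    have h2 : ((B ^ m) *ᵥ y) i0 = ‖((B' ^ m) *ᵥ y') i0‖ := by
      rw [hB', map_pow_ofReal, mulVec_map_ofReal]
      rw [Complex.norm_real, Real.norm_of_nonneg
        (mulVec_nonneg (pow_entry_nonneg hB m) hy i0)]
    have h3 : ‖((B' ^ m) *ᵥ y') i0‖ ≤ ‖(B' ^ m) *ᵥ y'‖ := norm_le_pi_norm _ i0
    have h4 : ‖(B' ^ m) *ᵥ y'‖ ≤ ‖B' ^ m‖ * ‖y'‖ := Matrix.linfty_opNorm_mulVec _ _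
    have : t ^ m * y i0 ≤ ‖B' ^ m‖ * ‖y'‖ := by
      calc t ^ m * y i0 ≤ ‖((B' ^ m) *ᵥ y') i0‖ := h2 ▸ h1
        _ ≤ ‖(B' ^ m) *ᵥ y'‖ := h3
        _ ≤ ‖B' ^ m‖ * ‖y'‖ := h4
    rw [hc]
    rw [div_mul_eq_mul_div, div_le_iff₀ hy'norm]
    calc y i0 * t ^ m = t ^ m * y i0 := by ring
      _ ≤ ‖B' ^ m‖ * ‖y'‖ := this
  -- Gelfand
  have gelfand : Tendsto (fun m : ℕ => (‖B' ^ m‖₊ : ℝ≥0∞) ^ (1 / m : ℝ)) atTop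
      (𝓝 (spectralRadius ℂ B')) :=
    spectrum.pow_nnnorm_pow_one_div_tendsto_nhds_spectralRadius B'
  -- lower sequence
  have hclim : Tendsto (fun m : ℕ => c ^ ((1 : ℝ) / m)) atTop (𝓝 1) := by
    have h0 : Tendsto (fun m : ℕ => (1 : ℝ) / m) atTop (𝓝 0) :=
      tendsto_one_div_atTop_nhds_zero_nat
    have := (Real.continuousAt_const_rpow (a := c) (b := 0) (ne_of_gt hcpos)).tendsto.comp h0
    simpa [Real.rpow_zero, Function.comp_def] using this
  have hglim : Tendsto (fun m : ℕ => ENNReal.ofReal (c ^ ((1 : ℝ) / m) * t)) atTop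
      (𝓝 (ENNReal.ofReal t)) := by
    have : Tendsto (fun m : ℕ => c ^ ((1 : ℝ) / m) * t) atTop (𝓝 (1 * t)) :=
      hclim.mul_const t
    rw [one_mul] at this
    exact (ENNReal.continuous_ofReal.tendsto t).comp this
  have hle : ∀ᶠ m : ℕ in atTop,
      ENNReal.ofReal (c ^ ((1 : ℝ) / m) * t) ≤ (‖B' ^ m‖₊ : ℝ≥0∞) ^ (1 / m : ℝ) := by
    filter_upwards [eventually_ge_atTop 1] with m hm
    have hm0 : (m : ℝ) ≠ 0 := Nat.cast_ne_zero.mpr (Nat.one_le_iff_ne_zero.mp hm)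
    have hmn : (0 : ℝ) ≤ 1 / m := by positivity
    have hR : c ^ ((1 : ℝ) / m) * t ≤ ‖B' ^ m‖ ^ ((1 : ℝ) / m) := by
      have h1 : (c * t ^ m) ^ ((1 : ℝ) / m) ≤ ‖B' ^ m‖ ^ ((1 : ℝ) / m) :=
        Real.rpow_le_rpow (by positivity) (key m) hmn
      have h2 : (c * t ^ m) ^ ((1 : ℝ) / m) = c ^ ((1 : ℝ) / m) * t := by
        rw [Real.mul_rpow (le_of_lt hcpos) (by positivity)]
        congr 1
        rw [← Real.rpow_natCast t m, ← Real.rpow_mul ht]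
        rw [mul_one_div, div_self hm0, Real.rpow_one]
      rw [← h2]; exact h1
    calc ENNReal.ofReal (c ^ ((1 : ℝ) / m) * t)
        ≤ ENNReal.ofReal (‖B' ^ m‖ ^ ((1 : ℝ) / m)) := ENNReal.ofReal_le_ofReal hR
      _ = (ENNReal.ofReal ‖B' ^ m‖) ^ ((1 : ℝ) / m) :=
          (ENNReal.ofReal_rpow_of_nonneg (norm_nonneg _) hmn).symm
      _ = (‖B' ^ m‖₊ : ℝ≥0∞) ^ (1 / m : ℝ) := by rw [ofReal_norm, enorm_eq_nnnorm]
  exact le_of_tendsto_of_tendsto hglim gelfand hle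

/-- The supremum defining `specRad` is attained on the (compact, nonempty) spectrum. -/
lemma specRad_attained (hn : 0 < n) (M : Matrix (Fin n) (Fin n) ℂ) :
    (∃ μ ∈ spectrum ℂ M, ‖μ‖ = specRad M) ∧
      ∀ ν ∈ spectrum ℂ M, ‖ν‖ ≤ specRad M := by
  haveI : Nonempty (Fin n) := ⟨⟨0, hn⟩⟩
  have hne : (spectrum ℂ M).Nonempty := spectrum.nonempty M
  have hcpt : IsCompact (spectrum ℂ M) := spectrum.isCompact M
  have hKcpt : IsCompact ((fun μ : ℂ => ‖μ‖) '' spectrum ℂ M) :=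
    hcpt.image continuous_norm
  have hKne : ((fun μ : ℂ => ‖μ‖) '' spectrum ℂ M).Nonempty := hne.image _
  have hmem : specRad M ∈ (fun μ : ℂ => ‖μ‖) '' spectrum ℂ M :=
    hKcpt.sSup_mem hKne
  obtain ⟨μ, hμ, hμeq⟩ := hmem
  refine ⟨⟨μ, hμ, hμeq⟩, fun ν hν => ?_⟩
  exact le_csSup hKcpt.bddAbove ⟨ν, hν, rfl⟩

lemma spectralRadius_le_ofReal_specRad (hn : 0 < n) (M : Matrix (Fin n) (Fin n) ℂ) :
    spectralRadius ℂ M ≤ ENNReal.ofReal (specRad M) := by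
  rw [spectralRadius]
  refine iSup₂_le fun k hk => ?_
  rw [← enorm_eq_nnnorm, ← ofReal_norm]
  exact ENNReal.ofReal_le_ofReal
    (by exact (specRad_attained hn M).2 k hk)

lemma specRad_nonneg (hn : 0 < n) (M : Matrix (Fin n) (Fin n) ℂ) : 0 ≤ specRad M := by
  obtain ⟨⟨μ, _, hμ⟩, _⟩ := specRad_attained hn M
  rw [← hμ]; exact norm_nonneg _

/-- From the Collatz–Wielandt bound to `specRad`. -/
lemma cw_le_specRad (hn : 0 < n) (B : Matrix (Fin n) (Fin n) ℝ) (hB : ∀ i j, 0 ≤ B i j)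
    {y : Fin n → ℝ} (hy : ∀ i, 0 ≤ y i) {i0 : Fin n} (hy0 : 0 < y i0)
    {t : ℝ} (ht : 0 ≤ t) (h : ∀ i, t * y i ≤ (B *ᵥ y) i) :
    t ≤ specRad (B.map (fun x => (x : ℂ))) := by
  have h1 := cw_le B hB hy hy0 ht h
  have h2 := spectralRadius_le_ofReal_specRad hn (B.map (fun x => (x : ℂ)))
  have := le_trans h1 h2
  rwa [ENNReal.ofReal_le_ofReal_iff (specRad_nonneg hn _)] at this

/-- Eigenvector extraction from spectrum membership. -/
lemma exists_eigenvector {μ : ℂ} {M : Matrix (Fin n) (Fin n) ℂ} (hμ : μ ∈ spectrum ℂ M) :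
    ∃ x : Fin n → ℂ, x ≠ 0 ∧ M *ᵥ x = μ • x := by
  rw [spectrum.mem_iff] at hμ
  have hdet : (algebraMap ℂ (Matrix (Fin n) (Fin n) ℂ) μ - M).det = 0 := by
    by_contra hne
    exact hμ ((Matrix.isUnit_iff_isUnit_det _).mpr (isUnit_iff_ne_zero.mpr hne))
  obtain ⟨v, hv0, hv⟩ := (Matrix.exists_mulVec_eq_zero_iff).mpr hdet
  refine ⟨v, hv0, ?_⟩
  have : (algebraMap ℂ (Matrix (Fin n) (Fin n) ℂ) μ) *ᵥ v - M *ᵥ v = 0 := by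
    rw [← Matrix.sub_mulVec]; exact hv
  have halg : (algebraMap ℂ (Matrix (Fin n) (Fin n) ℂ) μ) *ᵥ v = μ • v := by
    rw [Algebra.algebraMap_eq_smul_one, Matrix.smul_mulVec, Matrix.one_mulVec]
  rw [halg] at this
  exact (sub_eq_zero.mp this).symm

lemma mulVec_apply' (M : Matrix (Fin n) (Fin n) ℝ) (v : Fin n → ℝ) (i : Fin n) :
    (M *ᵥ v) i = ∑ j, M i j * v j := by
  simp [Matrix.mulVec, dotProduct]

end SpecRadAux

/-- If `A ≤ B` entrywise with both nonnegative, `B` irreducible (some power of `B` is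
entrywise strictly positive), and `A i j < B i j` for at least one entry, then the
spectral radius of `A` is strictly smaller than that of `B`. -/
theorem specRad_strict_mono {n : ℕ} (A B : Matrix (Fin n) (Fin n) ℝ)
    (hA : ∀ i j, 0 ≤ A i j) (hB : ∀ i j, 0 ≤ B i j)
    (hAB : ∀ i j, A i j ≤ B i j)
    (hirr : ∃ k : ℕ, 0 < k ∧ ∀ i j, 0 < (B ^ k) i j)
    (hstrict : ∃ i j, A i j < B i j) :
    specRad (A.map (fun x => (x : ℂ))) < specRad (B.map (fun x => (x : ℂ))) := by
  classical
  open SpecRadAux in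
  obtain ⟨i0, j0, hstr⟩ := hstrict
  have hn : 0 < n := i0.pos
  obtain ⟨k, hk, hkpos⟩ := hirr
  set A' := A.map (fun x => (x : ℂ)) with hA'
  set B' := B.map (fun x => (x : ℂ)) with hB'
  obtain ⟨⟨μ, hμspec, hμabs⟩, -⟩ := SpecRadAux.specRad_attained hn A'
  rw [← hμabs]
  obtain ⟨x, hx0, hxeig⟩ := SpecRadAux.exists_eigenvector hμspec
  set y : Fin n → ℝ := fun i => ‖x i‖ with hy_def
  have hy : ∀ i, 0 ≤ y i := fun i => norm_nonneg _
  obtain ⟨j1, hj1⟩ : ∃ j1, x j1 ≠ 0 := Function.ne_iff.mp hx0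
  have hj1pos : 0 < y j1 := norm_pos_iff.mpr hj1
  -- basic inequalities
  have hAy : ∀ i, ‖μ‖ * y i ≤ (A *ᵥ y) i := by
    intro i
    have h1 : (A' *ᵥ x) i = μ * x i := by
      have := congrFun hxeig i
      simpa [Pi.smul_apply, smul_eq_mul] using this
    have h2 : ‖μ‖ * y i = ‖(A' *ᵥ x) i‖ := by
      rw [h1, norm_mul]
    rw [h2]
    have h3 : (A' *ᵥ x) i = ∑ j, (A i j : ℂ) * x j := by
      simp [hA', Matrix.mulVec, dotProduct, Matrix.map_apply]
    rw [h3, SpecRadAux.mulVec_apply']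
    calc ‖∑ j, (A i j : ℂ) * x j‖ ≤ ∑ j, ‖(A i j : ℂ) * x j‖ :=
          norm_sum_le _ _
      _ = ∑ j, A i j * y j := by
          refine Finset.sum_congr rfl fun j _ => ?_
          rw [norm_mul, Complex.norm_real, Real.norm_of_nonneg (hA i j)]
  have hABy : ∀ i, (A *ᵥ y) i ≤ (B *ᵥ y) i := by
    intro i
    rw [SpecRadAux.mulVec_apply', SpecRadAux.mulVec_apply']
    exact Finset.sum_le_sum fun j _ => mul_le_mul_of_nonneg_right (hAB i j) (hy j)
  have hμB : ∀ i, ‖μ‖ * y i ≤ (B *ᵥ y) i := fun i => (hAy i).trans (hABy i)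
  have hμle : ‖μ‖ ≤ specRad B' :=
    SpecRadAux.cw_le_specRad hn B hB hy hj1pos (norm_nonneg _) hμB
  refine lt_of_le_of_ne hμle fun heq => ?_
  set r := specRad B' with hr
  -- r > 0
  have hrowpos : ∀ i, 0 < ∑ j, B i j := by
    intro i
    rcases (Finset.sum_nonneg fun j _ => hB i j).lt_or_eq with h | h
    · exact h
    · exfalso
      have hzero : ∀ j, B i j = 0 := by
        intro j
        have := (Finset.sum_eq_zero_iff_of_nonneg fun j _ => hB i j).mp h.symm
        exact this j (Finset.mem_univ j)
      obtain ⟨m, rfl⟩ := Nat.exists_eq_succ_of_ne_zero hk.ne'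
      have : (B ^ (m + 1)) i i = 0 := by
        rw [pow_succ', Matrix.mul_apply]
        exact Finset.sum_eq_zero fun l _ => by rw [hzero l, zero_mul]
      exact absurd (hkpos i i) (by rw [this]; exact lt_irrefl 0)
  have hij0 : i0 ∈ (Finset.univ : Finset (Fin n)) := Finset.mem_univ i0
  have huniv : (Finset.univ : Finset (Fin n)).Nonempty := ⟨i0, hij0⟩
  set t0 : ℝ := Finset.univ.inf' huniv (fun i => ∑ j, B i j) with ht0
  have ht0pos : 0 < t0 := by
    rw [ht0, Finset.lt_inf'_iff]
    exact fun i _ => hrowpos i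
  have hone : ∀ i, t0 * (fun _ : Fin n => (1 : ℝ)) i ≤ (B *ᵥ (fun _ => 1)) i := by
    intro i
    rw [SpecRadAux.mulVec_apply']
    have h5 : t0 ≤ ∑ j, B i j := Finset.inf'_le (fun i => ∑ j, B i j) (Finset.mem_univ i)
    simpa using h5
  have hrpos : 0 < r :=
    lt_of_lt_of_le ht0pos
      (SpecRadAux.cw_le_specRad hn B hB (fun _ => zero_le_one) (i0 := i0) one_pos
        ht0pos.le hone)
  -- subinvariance
  have hsub : ∀ i, r * y i ≤ (B *ᵥ y) i := fun i => heq ▸ hμB i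
  have hBknn := SpecRadAux.pow_entry_nonneg hB k
  set z : Fin n → ℝ := (B ^ k) *ᵥ y with hz_def
  have hz : ∀ i, 0 < z i := fun i =>
    SpecRadAux.mulVec_pos hBknn hy (hkpos i j1) hj1pos
  have hBy : B *ᵥ y = r • y := by
    by_contra hne
    set d : Fin n → ℝ := fun i => (B *ᵥ y) i - r * y i with hd_def
    have hd : ∀ i, 0 ≤ d i := fun i => sub_nonneg.mpr (hsub i)
    obtain ⟨i1, hd1⟩ : ∃ i1, 0 < d i1 := by
      by_contra hall
      push_neg at hall
      apply hne
      funext i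
      have : d i = 0 := le_antisymm (hall i) (hd i)
      have := sub_eq_zero.mp this
      simp [Pi.smul_apply, smul_eq_mul]
      linarith [sub_eq_zero.mp (le_antisymm (hall i) (hd i) : d i = 0)]
    have hzup : ∀ i, r * z i < (B *ᵥ z) i := by
      intro i
      have hcomm : B *ᵥ z = (B ^ k) *ᵥ (B *ᵥ y) := by
        rw [hz_def, Matrix.mulVec_mulVec, Matrix.mulVec_mulVec, ← pow_succ', ← pow_succ]
      have e1 : (B *ᵥ z) i = ∑ j, (B ^ k) i j * (B *ᵥ y) j := by
        rw [hcomm, SpecRadAux.mulVec_apply']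
      have e2 : r * z i = ∑ j, (B ^ k) i j * (r * y j) := by
        rw [hz_def, SpecRadAux.mulVec_apply', Finset.mul_sum]
        exact Finset.sum_congr rfl fun j _ => by ring
      have e3 : (B *ᵥ z) i - r * z i = ∑ j, (B ^ k) i j * d j := by
        rw [e1, e2, ← Finset.sum_sub_distrib]
        exact Finset.sum_congr rfl fun j _ => by rw [hd_def]; ring
      have e4 : 0 < ∑ j, (B ^ k) i j * d j :=
        lt_of_lt_of_le (mul_pos (hkpos i i1) hd1)
          (Finset.single_le_sum (f := fun j => (B ^ k) i j * d j)
            (fun j _ => mul_nonneg (hBknn i j) (hd j)) (Finset.mem_univ i1))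
      linarith [e3 ▸ e4]
    set t1 : ℝ := Finset.univ.inf' huniv (fun i => (B *ᵥ z) i / z i) with ht1
    have ht1r : r < t1 := by
      rw [ht1, Finset.lt_inf'_iff]
      exact fun i _ => (lt_div_iff₀ (hz i)).mpr (by linarith [hzup i])
    have ht1le : ∀ i, t1 * z i ≤ (B *ᵥ z) i := by
      intro i
      have := Finset.inf'_le (fun i => (B *ᵥ z) i / z i) (Finset.mem_univ i)
      rw [← ht1] at this
      calc t1 * z i ≤ ((B *ᵥ z) i / z i) * z i :=
            mul_le_mul_of_nonneg_right this (hz i).le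
        _ = (B *ᵥ z) i := div_mul_cancel₀ _ (hz i).ne'
    have := SpecRadAux.cw_le_specRad hn B hB (fun i => (hz i).le) (hz i0)
      (le_of_lt (lt_trans hrpos ht1r)) ht1le
    rw [← hr] at this
    linarith
  -- y strictly positive
  have hyk : ∀ m : ℕ, (B ^ m) *ᵥ y = (r ^ m) • y := by
    intro m
    induction m with
    | zero => simp [Matrix.one_mulVec]
    | succ m ih =>
      rw [pow_succ', ← Matrix.mulVec_mulVec, ih, Matrix.mulVec_smul, hBy,
        smul_smul, ← pow_succ]
  have hypos : ∀ i, 0 < y i := by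
    intro i
    refine (hy i).lt_of_ne' fun h0 => ?_
    have := hz i
    rw [hz_def, hyk k] at this
    simp [Pi.smul_apply, smul_eq_mul, h0] at this
  -- final contradiction
  have hlt : (A *ᵥ y) i0 < (B *ᵥ y) i0 := by
    rw [SpecRadAux.mulVec_apply', SpecRadAux.mulVec_apply']
    refine Finset.sum_lt_sum (fun j _ => mul_le_mul_of_nonneg_right (hAB i0 j) (hy j))
      ⟨j0, Finset.mem_univ j0, mul_lt_mul_of_pos_right hstr (hypos j0)⟩
  have hB0 : (B *ᵥ y) i0 = r * y i0 := by
    rw [hBy]; simp [Pi.smul_apply, smul_eq_mul]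
  have hA0 : r * y i0 ≤ (A *ᵥ y) i0 := heq ▸ hAy i0
  linarith
end

section
/- Let A be an n×n and B an m×m real symmetric matrix with n ≤ m, both having all off-diagonal entries nonpositive, and such that B_{ij} ≤ A_{ij} for all 1 ≤ i,j ≤ n. Then the smallest eigenvalue of B is at most the smallest eigenvalue of A. -/
open Matrix

lemma rayleigh_lb {k : ℕ} [NeZero k] (M : Matrix (Fin k) (Fin k) ℝ)
    (hM : M.IsHermitian) (x : Fin k → ℝ) :
    (⨅ i, hM.eigenvalues i) * (x ⬝ᵥ x) ≤ x ⬝ᵥ (M *ᵥ x) := by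
  classical
  set U : Matrix (Fin k) (Fin k) ℝ := (hM.eigenvectorUnitary : Matrix (Fin k) (Fin k) ℝ) with hU
  set y : Fin k → ℝ := star U *ᵥ x with hy
  have hUU : U * star U = 1 := (Matrix.mem_unitaryGroup_iff).mp hM.eigenvectorUnitary.2
  have hUT : (star U)ᵀ = U := by
    ext i j; simp [Matrix.star_eq_conjTranspose, Matrix.conjTranspose_apply]
  have hxx : x ⬝ᵥ x = y ⬝ᵥ y := by
    rw [hy, Matrix.dotProduct_mulVec, ← Matrix.mulVec_transpose, hUT,
      Matrix.mulVec_mulVec, hUU, Matrix.one_mulVec]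
  have hMx : x ⬝ᵥ (M *ᵥ x) = ∑ i, hM.eigenvalues i * y i ^ 2 := by
    conv_lhs => rw [hM.spectral_theorem, Unitary.conjStarAlgAut_apply]
    rw [← Matrix.mulVec_mulVec, ← Matrix.mulVec_mulVec, Matrix.dotProduct_mulVec,
      ← Matrix.mulVec_transpose]
    have hUT2 : Uᵀ = star U := by
      ext i j; simp [Matrix.star_eq_conjTranspose, Matrix.conjTranspose_apply]
    rw [hUT2, ← hy]
    simp only [Matrix.mulVec_diagonal, dotProduct, Function.comp_apply,
      RCLike.ofReal_real_eq_id, id_eq, sq]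
    exact Finset.sum_congr rfl fun i _ => by ring
  rw [hxx, hMx]
  have hbdd : BddBelow (Set.range hM.eigenvalues) := Set.Finite.bddBelow (Set.finite_range _)
  rw [dotProduct, Finset.mul_sum]
  apply Finset.sum_le_sum
  intro i _
  have h1 : (⨅ j, hM.eigenvalues j) ≤ hM.eigenvalues i := ciInf_le hbdd i
  have h2 : (0:ℝ) ≤ y i * y i := mul_self_nonneg _
  calc (⨅ j, hM.eigenvalues j) * (y i * y i) ≤ hM.eigenvalues i * (y i * y i) :=
        mul_le_mul_of_nonneg_right h1 h2
    _ = hM.eigenvalues i * y i ^ 2 := by ring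

/-- Let `A` be `n × n` and `B` be `m × m` real symmetric matrices, `n ≤ m`, both with all
off-diagonal entries nonpositive, and `B i j ≤ A i j` for all indices `i, j < n`. Then the
smallest eigenvalue of `B` is at most the smallest eigenvalue of `A`. -/
theorem min_eigenvalue_mono {n m : ℕ} (hn : 0 < n) (hnm : n ≤ m)
    (A : Matrix (Fin n) (Fin n) ℝ) (B : Matrix (Fin m) (Fin m) ℝ)
    (hA : A.IsHermitian) (hB : B.IsHermitian)
    (hAoff : ∀ i j, i ≠ j → A i j ≤ 0)
    (hBoff : ∀ i j, i ≠ j → B i j ≤ 0)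
    (hBA : ∀ i j : Fin n, B (Fin.castLE hnm i) (Fin.castLE hnm j) ≤ A i j) :
    (⨅ i, hB.eigenvalues i) ≤ ⨅ i, hA.eigenvalues i := by
  classical
  have hNn : NeZero n := ⟨hn.ne'⟩
  have hNm : NeZero m := ⟨(hn.trans_le hnm).ne'⟩
  obtain ⟨i₀, hi₀⟩ := exists_eq_ciInf_of_finite (f := hA.eigenvalues)
  set v : Fin n → ℝ := fun i => hA.eigenvectorBasis i₀ i with hv
  have hAv : A *ᵥ v = hA.eigenvalues i₀ • v := hA.mulVec_eigenvectorBasis i₀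
  have hvv : v ⬝ᵥ v = 1 := by
    have h1 : ‖hA.eigenvectorBasis i₀‖ = 1 := hA.eigenvectorBasis.orthonormal.1 i₀
    have h2 : (inner ℝ (hA.eigenvectorBasis i₀) (hA.eigenvectorBasis i₀) : ℝ) = 1 := by
      rw [real_inner_self_eq_norm_sq, h1]; norm_num
    rw [dotProduct]
    rw [PiLp.inner_apply] at h2
    simpa [hv, sq] using h2
  set w : Fin m → ℝ := fun k => if h : (k : ℕ) < n then |v ⟨k, h⟩| else 0 with hw
  have hwc : ∀ i : Fin n, w (Fin.castLE hnm i) = |v i| := by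
    intro i
    simp only [hw, Fin.coe_castLE, i.isLt, dif_pos, Fin.eta]
  have hsum : ∀ g : Fin m → ℝ, (∀ k : Fin m, ¬((k : ℕ) < n) → g k = 0) →
      ∑ k, g k = ∑ i : Fin n, g (Fin.castLE hnm i) := by
    intro g hg
    calc ∑ k : Fin m, g k
        = ∑ k ∈ Finset.univ.map (Fin.castLEEmb hnm), g k := by
          refine (Finset.sum_subset (Finset.subset_univ _) ?_).symm
          intro k _ hk
          refine hg k fun hlt => hk ?_
          exact Finset.mem_map.mpr ⟨⟨(k : ℕ), hlt⟩, Finset.mem_univ _, by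
            simp [Fin.castLEEmb, Fin.castLE]⟩
      _ = ∑ i : Fin n, g (Fin.castLEEmb hnm i) := Finset.sum_map _ _ _
      _ = ∑ i : Fin n, g (Fin.castLE hnm i) := rfl
  have hw0 : ∀ k : Fin m, ¬((k : ℕ) < n) → w k = 0 := fun k hk => dif_neg hk
  have hww : w ⬝ᵥ w = 1 := by
    rw [dotProduct, hsum (fun k => w k * w k) (fun k hk => by simp [hw0 k hk])]
    rw [← hvv, dotProduct]
    exact Finset.sum_congr rfl fun i _ => by rw [hwc i, abs_mul_abs_self]
  have key : w ⬝ᵥ (B *ᵥ w) ≤ hA.eigenvalues i₀ := by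
    have e1 : w ⬝ᵥ (B *ᵥ w) =
        ∑ i : Fin n, ∑ j : Fin n, |v i| * (B (Fin.castLE hnm i) (Fin.castLE hnm j) * |v j|) := by
      rw [dotProduct,
        hsum (fun k => w k * (B *ᵥ w) k) (fun k hk => by simp [hw0 k hk])]
      refine Finset.sum_congr rfl fun i _ => ?_
      rw [hwc i, Matrix.mulVec, dotProduct,
        hsum (fun l => B (Fin.castLE hnm i) l * w l) (fun l hl => by simp [hw0 l hl]),
        Finset.mul_sum]
      exact Finset.sum_congr rfl fun j _ => by rw [hwc j]
    have e2 : v ⬝ᵥ (A *ᵥ v) = hA.eigenvalues i₀ := by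
      rw [hAv, dotProduct_smul, smul_eq_mul, hvv, mul_one]
    rw [e1, ← e2]
    have e3 : v ⬝ᵥ (A *ᵥ v) = ∑ i : Fin n, ∑ j : Fin n, v i * (A i j * v j) := by
      rw [dotProduct]
      refine Finset.sum_congr rfl fun i _ => ?_
      rw [Matrix.mulVec, dotProduct, Finset.mul_sum]
    rw [e3]
    refine Finset.sum_le_sum fun i _ => Finset.sum_le_sum fun j _ => ?_
    have habs : (0:ℝ) ≤ |v i| := abs_nonneg _
    have step1 : |v i| * (B (Fin.castLE hnm i) (Fin.castLE hnm j) * |v j|) ≤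
        |v i| * (A i j * |v j|) :=
      mul_le_mul_of_nonneg_left (mul_le_mul_of_nonneg_right (hBA i j) (abs_nonneg _)) habs
    refine step1.trans ?_
    by_cases hij : i = j
    · subst hij
      have : |v i| * (A i i * |v i|) = A i i * (|v i| * |v i|) := by ring
      rw [this, abs_mul_abs_self]; nlinarith [sq_nonneg (v i)]
    · have hA0 : A i j ≤ 0 := hAoff i j hij
      have h4 : v i * v j ≤ |v i| * |v j| := by
        calc v i * v j ≤ |v i * v j| := le_abs_self _
          _ = |v i| * |v j| := abs_mul _ _
      have : A i j * (|v i| * |v j|) ≤ A i j * (v i * v j) :=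
        mul_le_mul_of_nonpos_left h4 hA0
      nlinarith
  calc (⨅ i, hB.eigenvalues i) = (⨅ i, hB.eigenvalues i) * (w ⬝ᵥ w) := by rw [hww, mul_one]
    _ ≤ w ⬝ᵥ (B *ᵥ w) := rayleigh_lb B hB w
    _ ≤ hA.eigenvalues i₀ := key
    _ = ⨅ i, hA.eigenvalues i := hi₀
end

section
/- The number of configurations of n non-crossing arcs on k linearly ordered vertices such that no arc spans an unpaired vertex (i.e., no unpaired vertex lies strictly below/under any arc) equals the ballot number binom(k, n) − binom(k, n−1), for 0 ≤ n ≤ k/2. -/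
open Finset


/-- A Temperley–Lieb arc configuration on `k` linearly ordered vertices:
a set of arcs `(x, y)` with `x < y`, pairwise disjoint endpoints, mutually
non-crossing, and such that no arc spans an unpaired vertex. -/
def IsTLConfig {k : ℕ} (α : Finset (Fin k × Fin k)) : Prop :=
  (∀ p ∈ α, p.1 < p.2) ∧
  -- disjoint endpoints: distinct arcs share no vertex
  (∀ p ∈ α, ∀ q ∈ α, p ≠ q →
    p.1 ≠ q.1 ∧ p.1 ≠ q.2 ∧ p.2 ≠ q.1 ∧ p.2 ≠ q.2) ∧
  -- non-crossing
  (∀ p ∈ α, ∀ q ∈ α, ¬(p.1 < q.1 ∧ q.1 < p.2 ∧ p.2 < q.2)) ∧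
  -- no arc spans an unpaired vertex
  (∀ p ∈ α, ∀ z : Fin k, p.1 < z → z < p.2 →
    ∃ q ∈ α, z = q.1 ∨ z = q.2)

namespace TLaux

variable {k : ℕ}

def Endpts (β : Finset (Fin k × Fin k)) : Finset (Fin k) :=
  β.image Prod.fst ∪ β.image Prod.snd

lemma mem_Endpts {β : Finset (Fin k × Fin k)} {z : Fin k} :
    z ∈ Endpts β ↔ ∃ q ∈ β, z = q.1 ∨ z = q.2 := by
  simp only [Endpts, mem_union, mem_image]
  constructor
  · rintro (⟨q, hq, rfl⟩ | ⟨q, hq, rfl⟩)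
    · exact ⟨q, hq, Or.inl rfl⟩
    · exact ⟨q, hq, Or.inr rfl⟩
  · rintro ⟨q, hq, (rfl | rfl)⟩
    · exact Or.inl ⟨q, hq, rfl⟩
    · exact Or.inr ⟨q, hq, rfl⟩

lemma card_Endpts {β : Finset (Fin k × Fin k)} (h : IsTLConfig β) :
    (Endpts β).card = 2 * β.card := by
  have hfst : Set.InjOn Prod.fst (β : Set (Fin k × Fin k)) := by
    intro p hp q hq hpq
    by_contra hne
    exact (h.2.1 p hp q hq hne).1 hpq
  have hsnd : Set.InjOn Prod.snd (β : Set (Fin k × Fin k)) := by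
    intro p hp q hq hpq
    by_contra hne
    exact (h.2.1 p hp q hq hne).2.2.2 hpq
  have hdisj : Disjoint (β.image Prod.fst) (β.image Prod.snd) := by
    rw [Finset.disjoint_left]
    rintro a ha hb
    rw [mem_image] at ha hb
    obtain ⟨p, hp, hpa⟩ := ha
    obtain ⟨q, hq, hqa⟩ := hb
    by_cases hpq : p = q
    · subst hpq
      exact absurd (hpa.trans hqa.symm) (ne_of_lt (h.1 p hp))
    · exact (h.2.1 p hp q hq hpq).2.1 (hpa.trans hqa.symm)
  rw [Endpts, Finset.card_union_of_disjoint hdisj,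
    Finset.card_image_of_injOn hfst, Finset.card_image_of_injOn hsnd]
  ring

lemma two_mul_card_le {β : Finset (Fin k × Fin k)} (h : IsTLConfig β) :
    2 * β.card ≤ k := by
  calc 2 * β.card = (Endpts β).card := (card_Endpts h).symm
    _ ≤ (Finset.univ : Finset (Fin k)).card := Finset.card_le_univ _
    _ = k := by simp

lemma empty_TL : IsTLConfig (∅ : Finset (Fin k × Fin k)) := by
  refine ⟨?_, ?_, ?_, ?_⟩ <;> simp


def upEmb (k : ℕ) : Fin k × Fin k ↪ Fin (k + 1) × Fin (k + 1) :=
  (⟨Fin.castSucc, Fin.castSucc_injective k⟩ : Fin k ↪ Fin (k + 1)).prodMap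
    ⟨Fin.castSucc, Fin.castSucc_injective k⟩

def up (β : Finset (Fin k × Fin k)) : Finset (Fin (k + 1) × Fin (k + 1)) :=
  β.map (upEmb k)

lemma upEmb_apply (q : Fin k × Fin k) : upEmb k q = (q.1.castSucc, q.2.castSucc) := rfl

lemma mem_up {β : Finset (Fin k × Fin k)} {p : Fin (k + 1) × Fin (k + 1)} :
    p ∈ up β ↔ ∃ q ∈ β, (q.1.castSucc, q.2.castSucc) = p := by
  simp [up, upEmb_apply, Finset.mem_map]

lemma card_up (β : Finset (Fin k × Fin k)) : (up β).card = β.card :=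
  Finset.card_map _

lemma mem_Endpts_up {β : Finset (Fin k × Fin k)} {z : Fin k} :
    z.castSucc ∈ Endpts (up β) ↔ z ∈ Endpts β := by
  simp only [mem_Endpts, mem_up]
  constructor
  · rintro ⟨q, ⟨q', hq', rfl⟩, hz⟩
    refine ⟨q', hq', ?_⟩
    rcases hz with hz | hz
    · exact Or.inl (Fin.castSucc_injective _ hz)
    · exact Or.inr (Fin.castSucc_injective _ hz)
  · rintro ⟨q, hq, (rfl | rfl)⟩
    · exact ⟨(q.1.castSucc, q.2.castSucc), ⟨q, hq, rfl⟩, Or.inl rfl⟩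
    · exact ⟨(q.1.castSucc, q.2.castSucc), ⟨q, hq, rfl⟩, Or.inr rfl⟩

lemma isTL_up_iff {β : Finset (Fin k × Fin k)} :
    IsTLConfig (up β) ↔ IsTLConfig β := by
  constructor
  · rintro ⟨h1, h2, h3, h4⟩
    refine ⟨?_, ?_, ?_, ?_⟩
    · intro p hp
      have := h1 (upEmb k p) (Finset.mem_map_of_mem _ hp)
      simpa [upEmb_apply] using this
    · intro p hp q hq hpq
      have := h2 (upEmb k p) (Finset.mem_map_of_mem _ hp) (upEmb k q)
        (Finset.mem_map_of_mem _ hq) (fun hh => hpq ((upEmb k).injective hh))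
      simpa [upEmb_apply, Fin.castSucc_inj] using this
    · intro p hp q hq
      have := h3 (upEmb k p) (Finset.mem_map_of_mem _ hp) (upEmb k q)
        (Finset.mem_map_of_mem _ hq)
      simpa [upEmb_apply] using this
    · intro p hp z h1z h2z
      have := h4 (upEmb k p) (Finset.mem_map_of_mem _ hp) z.castSucc
        (by simpa [upEmb_apply]) (by simpa [upEmb_apply])
      exact mem_Endpts.mp (mem_Endpts_up.mp (mem_Endpts.mpr this))
  · rintro ⟨h1, h2, h3, h4⟩
    refine ⟨?_, ?_, ?_, ?_⟩
    · rintro p hp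
      obtain ⟨q, hq, rfl⟩ := mem_up.mp hp
      simpa using h1 q hq
    · rintro p hp q hq hpq
      obtain ⟨p', hp', rfl⟩ := mem_up.mp hp
      obtain ⟨q', hq', rfl⟩ := mem_up.mp hq
      have hne : p' ≠ q' := by
        rintro rfl; exact hpq rfl
      have := h2 p' hp' q' hq' hne
      simpa [Fin.castSucc_inj] using this
    · rintro p hp q hq
      obtain ⟨p', hp', rfl⟩ := mem_up.mp hp
      obtain ⟨q', hq', rfl⟩ := mem_up.mp hq
      have := h3 p' hp' q' hq'
      simpa using this
    · rintro p hp z h1z h2z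
      obtain ⟨p', hp', rfl⟩ := mem_up.mp hp
      simp only at h1z h2z
      have hzlast : z ≠ Fin.last k := by
        intro hz
        rw [hz] at h2z
        exact absurd h2z (not_lt.mpr (Fin.le_last _))
      obtain ⟨w, rfl⟩ := Fin.exists_castSucc_eq.mpr hzlast
      have hw1 : p'.1 < w := by simpa using h1z
      have hw2 : w < p'.2 := by simpa using h2z
      obtain ⟨q, hq, hzq⟩ := h4 p' hp' w hw1 hw2
      refine ⟨(q.1.castSucc, q.2.castSucc), mem_up.mpr ⟨q, hq, rfl⟩, ?_⟩
      rcases hzq with rfl | rfl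
      · exact Or.inl rfl
      · exact Or.inr rfl


def low (x : Fin (k + 2)) : Fin (k + 1) :=
  if h : x.val < k + 1 then ⟨x.val, h⟩ else 0

def down (α : Finset (Fin (k + 2) × Fin (k + 2))) :
    Finset (Fin (k + 1) × Fin (k + 1)) :=
  α.image (fun p => (low p.1, low p.2))

lemma castSucc_low {x : Fin (k + 2)} (h : x ≠ Fin.last (k + 1)) :
    (low x).castSucc = x := by
  have hx : x.val < k + 1 := Fin.val_lt_last h
  simp only [low, dif_pos hx]
  exact Fin.ext rfl

lemma up_down {α : Finset (Fin (k + 2) × Fin (k + 2))}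
    (h : ∀ p ∈ α, p.1 ≠ Fin.last (k + 1) ∧ p.2 ≠ Fin.last (k + 1)) :
    up (down α) = α := by
  ext p
  rw [mem_up]
  constructor
  · rintro ⟨q, hq, rfl⟩
    rw [down, Finset.mem_image] at hq
    obtain ⟨r, hr, rfl⟩ := hq
    simp only [castSucc_low (h r hr).1, castSucc_low (h r hr).2]
    exact hr
  · intro hp
    refine ⟨(low p.1, low p.2), ?_, ?_⟩
    · rw [down, Finset.mem_image]; exact ⟨p, hp, rfl⟩
    · simp [castSucc_low (h p hp).1, castSucc_low (h p hp).2]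

lemma card_down {α : Finset (Fin (k + 2) × Fin (k + 2))}
    (h : ∀ p ∈ α, p.1 ≠ Fin.last (k + 1) ∧ p.2 ≠ Fin.last (k + 1)) :
    (down α).card = α.card := by
  conv_rhs => rw [← up_down h]
  rw [card_up]

def lastUnp (β : Finset (Fin (k + 1) × Fin (k + 1))) : Fin (k + 1) :=
  if h : (Finset.univ \ Endpts β).Nonempty then (Finset.univ \ Endpts β).max' h else 0

lemma lastUnp_spec {β : Finset (Fin (k + 1) × Fin (k + 1))}
    (h : (Finset.univ \ Endpts β).Nonempty) :
    lastUnp β ∉ Endpts β ∧ ∀ z, z ∉ Endpts β → z ≤ lastUnp β := by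
  rw [lastUnp, dif_pos h]
  constructor
  · have := (Finset.univ \ Endpts β).max'_mem h
    rw [Finset.mem_sdiff] at this
    exact this.2
  · intro z hz
    exact Finset.le_max' _ z (Finset.mem_sdiff.mpr ⟨Finset.mem_univ _, hz⟩)

lemma unp_nonempty {β : Finset (Fin (k + 1) × Fin (k + 1))} (hβ : IsTLConfig β)
    (hc : 2 * β.card < k + 1) : (Finset.univ \ Endpts β).Nonempty := by
  rw [Finset.sdiff_nonempty]
  intro hsub
  have : (Finset.univ : Finset (Fin (k + 1))).card ≤ (Endpts β).card :=
    Finset.card_le_card hsub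
  rw [Finset.card_univ, Fintype.card_fin, card_Endpts hβ] at this
  omega


lemma new_notin_up {β : Finset (Fin (k + 1) × Fin (k + 1))} {a : Fin (k + 1)} :
    (a.castSucc, Fin.last (k + 1)) ∉ up β := by
  intro h
  obtain ⟨q, _, hq⟩ := mem_up.mp h
  have : q.2.castSucc = Fin.last (k + 1) := congrArg Prod.snd hq
  exact absurd this (Fin.castSucc_lt_last _).ne

lemma insert_TL {β : Finset (Fin (k + 1) × Fin (k + 1))} (hβ : IsTLConfig β)
    (hne : (Finset.univ \ Endpts β).Nonempty) :
    IsTLConfig (insert ((lastUnp β).castSucc, Fin.last (k + 1)) (up β)) := by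
  set M := lastUnp β with hMdef
  have hM : M ∉ Endpts β := (lastUnp_spec hne).1
  have hMmax : ∀ z, z ∉ Endpts β → z ≤ M := (lastUnp_spec hne).2
  have hMnotunder : ∀ p ∈ β, ¬(p.1 < M ∧ M < p.2) := by
    rintro p hp ⟨h1, h2⟩
    exact hM (mem_Endpts.mpr (hβ.2.2.2 p hp M h1 h2))
  obtain ⟨u1, u2, u3, u4⟩ := isTL_up_iff.mpr hβ
  set N : Fin (k + 2) × Fin (k + 2) := (M.castSucc, Fin.last (k + 1)) with hNdef
  refine ⟨?_, ?_, ?_, ?_⟩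
  · intro p hp
    rcases Finset.mem_insert.mp hp with rfl | hp
    · exact Fin.castSucc_lt_last M
    · exact u1 p hp
  · intro p hp q hq hpq
    rcases Finset.mem_insert.mp hp with rfl | hp <;>
      rcases Finset.mem_insert.mp hq with rfl | hq
    · exact absurd rfl hpq
    · obtain ⟨q', hq', rfl⟩ := mem_up.mp hq
      refine ⟨?_, ?_, ?_, ?_⟩
      · intro hh
        exact hM (mem_Endpts.mpr ⟨q', hq', Or.inl (Fin.castSucc_injective _ hh)⟩)
      · intro hh
        exact hM (mem_Endpts.mpr ⟨q', hq', Or.inr (Fin.castSucc_injective _ hh)⟩)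
      · exact (Fin.castSucc_lt_last _).ne'
      · exact (Fin.castSucc_lt_last _).ne'
    · obtain ⟨p', hp', rfl⟩ := mem_up.mp hp
      refine ⟨?_, ?_, ?_, ?_⟩
      · intro hh
        exact hM (mem_Endpts.mpr ⟨p', hp', Or.inl (Fin.castSucc_injective _ hh.symm)⟩)
      · exact (Fin.castSucc_lt_last _).ne
      · intro hh
        exact hM (mem_Endpts.mpr ⟨p', hp', Or.inr (Fin.castSucc_injective _ hh.symm)⟩)
      · exact (Fin.castSucc_lt_last _).ne
    · exact u2 p hp q hq hpq
  · intro p hp q hq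
    rcases Finset.mem_insert.mp hp with rfl | hp <;>
      rcases Finset.mem_insert.mp hq with rfl | hq
    · rintro ⟨h1, -, -⟩
      exact absurd h1 (lt_irrefl _)
    · rintro ⟨-, -, h3⟩
      obtain ⟨q', hq', rfl⟩ := mem_up.mp hq
      exact absurd (h3.trans (Fin.castSucc_lt_last _)) (lt_irrefl _)
    · rintro ⟨h1, h2, -⟩
      obtain ⟨p', hp', rfl⟩ := mem_up.mp hp
      have hh1 : p'.1 < M := by simpa [hNdef] using h1
      have hh2 : M < p'.2 := by simpa [hNdef] using h2
      exact hMnotunder p' hp' ⟨hh1, hh2⟩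
    · exact u3 p hp q hq
  · intro p hp z h1z h2z
    have hzlast : z ≠ Fin.last (k + 1) := by
      rcases Finset.mem_insert.mp hp with rfl | hp
      · exact h2z.ne
      · obtain ⟨p', hp', rfl⟩ := mem_up.mp hp
        exact (h2z.trans (Fin.castSucc_lt_last _)).ne
    obtain ⟨w, rfl⟩ := Fin.exists_castSucc_eq.mpr hzlast
    rcases Finset.mem_insert.mp hp with rfl | hp
    · have hMw : M < w := by simpa [hNdef] using h1z
      have hw : w ∈ Endpts β := by
        by_contra hw
        exact absurd (hMmax w hw) (not_le.mpr hMw)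
      obtain ⟨q, hq, hzq⟩ := mem_Endpts.mp hw
      refine ⟨(q.1.castSucc, q.2.castSucc),
        Finset.mem_insert_of_mem (mem_up.mpr ⟨q, hq, rfl⟩), ?_⟩
      rcases hzq with rfl | rfl
      · exact Or.inl rfl
      · exact Or.inr rfl
    · obtain ⟨q, hq, hzq⟩ := u4 p hp w.castSucc h1z h2z
      exact ⟨q, Finset.mem_insert_of_mem hq, hzq⟩


lemma filter_insert_up {β : Finset (Fin (k + 1) × Fin (k + 1))}
    {x : Fin (k + 2)} :
    ((insert (x, Fin.last (k + 1)) (up β)).filter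
      (fun p => p.2 ≠ Fin.last (k + 1))) = up β := by
  ext p
  simp only [Finset.mem_filter, Finset.mem_insert]
  constructor
  · rintro ⟨rfl | hp, hlast⟩
    · exact absurd rfl hlast
    · exact hp
  · intro hp
    refine ⟨Or.inr hp, ?_⟩
    obtain ⟨q, hq, rfl⟩ := mem_up.mp hp
    exact (Fin.castSucc_lt_last _).ne

lemma up_injective {a b : Finset (Fin k × Fin k)} (h : up a = up b) : a = b := by
  simp only [up] at h
  exact Finset.map_injective _ h

lemma recur (k n : ℕ) (hn : 1 ≤ n) (h2 : 2 * n ≤ k + 2) :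
    Nat.card {α : Finset (Fin (k + 2) × Fin (k + 2)) // IsTLConfig α ∧ α.card = n}
      = Nat.card {α : Finset (Fin (k + 1) × Fin (k + 1)) // IsTLConfig α ∧ α.card = n}
      + Nat.card {α : Finset (Fin (k + 1) × Fin (k + 1)) // IsTLConfig α ∧ α.card = n - 1} := by
  rw [← Nat.card_sum]
  refine (Nat.card_eq_of_bijective ?_ ?_).symm
  · rintro (⟨β, hTL, hc⟩ | ⟨β, hTL, hc⟩)
    · exact ⟨up β, isTL_up_iff.mpr hTL, by rw [card_up, hc]⟩
    · have hne : (Finset.univ \ Endpts β).Nonempty :=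
        unp_nonempty hTL (by omega)
      refine ⟨insert ((lastUnp β).castSucc, Fin.last (k + 1)) (up β),
        insert_TL hTL hne, ?_⟩
      rw [Finset.card_insert_of_notMem new_notin_up, card_up, hc]
      omega
  · constructor
    · rintro (⟨a, ha1, ha2⟩ | ⟨a, ha1, ha2⟩) (⟨b, hb1, hb2⟩ | ⟨b, hb1, hb2⟩) h <;>
        simp only [Subtype.mk.injEq] at h
      · have : a = b := up_injective h
        subst this; rfl
      · exfalso
        have : ((lastUnp b).castSucc, Fin.last (k + 1)) ∈ up a := by
          rw [h]; exact Finset.mem_insert_self _ _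
        exact new_notin_up this
      · exfalso
        have : ((lastUnp a).castSucc, Fin.last (k + 1)) ∈ up b := by
          rw [← h]; exact Finset.mem_insert_self _ _
        exact new_notin_up this
      · have hab : up a = up b := by
          rw [← filter_insert_up (β := a) (x := (lastUnp a).castSucc),
            ← filter_insert_up (β := b) (x := (lastUnp b).castSucc), h]
        have : a = b := up_injective hab
        subst this; rfl
    · rintro ⟨α, hTL, hcard⟩
      by_cases hl : ∀ p ∈ α, p.2 ≠ Fin.last (k + 1)
      · have hfst : ∀ p ∈ α, p.1 ≠ Fin.last (k + 1) ∧ p.2 ≠ Fin.last (k + 1) :=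
          fun p hp => ⟨((hTL.1 p hp).trans_le (Fin.le_last _)).ne, hl p hp⟩
        have hupd : up (down α) = α := up_down hfst
        refine ⟨Sum.inl ⟨down α, isTL_up_iff.mp (by rw [hupd]; exact hTL),
          by rw [card_down hfst, hcard]⟩, Subtype.ext hupd⟩
      · push_neg at hl
        obtain ⟨p₀, h0, hlast⟩ := hl
        set γ := α.erase p₀ with hγdef
        have hγl : ∀ p ∈ γ, p.1 ≠ Fin.last (k + 1) ∧ p.2 ≠ Fin.last (k + 1) := by
          intro p hp
          have hpα : p ∈ α := Finset.mem_of_mem_erase hp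
          have hpne : p ≠ p₀ := Finset.ne_of_mem_erase hp
          refine ⟨((hTL.1 p hpα).trans_le (Fin.le_last _)).ne, ?_⟩
          intro hh
          exact (hTL.2.1 p hpα p₀ h0 hpne).2.2.2 (hh.trans hlast.symm)
        have hγTL : IsTLConfig γ := by
          refine ⟨fun p hp => hTL.1 p (Finset.mem_of_mem_erase hp),
            fun p hp q hq => hTL.2.1 p (Finset.mem_of_mem_erase hp) q
              (Finset.mem_of_mem_erase hq),
            fun p hp q hq => hTL.2.2.1 p (Finset.mem_of_mem_erase hp) q
              (Finset.mem_of_mem_erase hq), ?_⟩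
          intro p hp z h1 h2
          obtain ⟨q, hq, hzq⟩ := hTL.2.2.2 p (Finset.mem_of_mem_erase hp) z h1 h2
          by_cases hqp : q = p₀
          · subst hqp
            exfalso
            rcases hzq with rfl | rfl
            · refine hTL.2.2.1 p (Finset.mem_of_mem_erase hp) q h0 ⟨h1, h2, ?_⟩
              rw [hlast]
              exact lt_of_le_of_ne (Fin.le_last _) (hγl p hp).2
            · rw [hlast] at h2
              exact absurd h2 (not_lt.mpr (Fin.le_last _))
          · exact ⟨q, Finset.mem_erase_of_ne_of_mem hqp hq, hzq⟩
        have hupd : up (down γ) = γ := up_down hγl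
        have hβTL : IsTLConfig (down γ) := isTL_up_iff.mp (by rw [hupd]; exact hγTL)
        have hβcard : (down γ).card = n - 1 := by
          rw [card_down hγl, hγdef, Finset.card_erase_of_mem h0, hcard]
        have hm : p₀.1 ≠ Fin.last (k + 1) :=
          ((hTL.1 p₀ h0).trans_le (Fin.le_last _)).ne
        have hlow : (low p₀.1).castSucc = p₀.1 := castSucc_low hm
        have hlowm : low p₀.1 ∉ Endpts (down γ) := by
          intro hmem
          have : (low p₀.1).castSucc ∈ Endpts (up (down γ)) := mem_Endpts_up.mpr hmem
          rw [hupd, hlow] at this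
          obtain ⟨q, hq, hzq⟩ := mem_Endpts.mp this
          have hqα : q ∈ α := Finset.mem_of_mem_erase hq
          have hqp : q ≠ p₀ := Finset.ne_of_mem_erase hq
          have hd := hTL.2.1 q hqα p₀ h0 hqp
          rcases hzq with hz | hz
          · exact hd.1 hz.symm
          · exact hd.2.2.1 hz.symm
        have hne' : (Finset.univ \ Endpts (down γ)).Nonempty :=
          ⟨low p₀.1, Finset.mem_sdiff.mpr ⟨Finset.mem_univ _, hlowm⟩⟩
        have hmax : lastUnp (down γ) = low p₀.1 := by
          refine le_antisymm ?_ ((lastUnp_spec hne').2 _ hlowm)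
          by_contra hlt
          push_neg at hlt
          have hcc : p₀.1 < (lastUnp (down γ)).castSucc := by
            rw [← hlow]
            exact Fin.castSucc_lt_castSucc_iff.mpr hlt
          have hcl : (lastUnp (down γ)).castSucc < p₀.2 := by
            rw [hlast]; exact Fin.castSucc_lt_last _
          obtain ⟨q, hq, hzq⟩ := hTL.2.2.2 p₀ h0 _ hcc hcl
          by_cases hqp : q = p₀
          · subst hqp
            rcases hzq with hz | hz
            · exact absurd hz.symm hcc.ne
            · rw [hlast] at hz
              exact absurd hz (Fin.castSucc_lt_last _).ne
          · have hqγ : q ∈ γ := Finset.mem_erase_of_ne_of_mem hqp hq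
            have h2' : (lastUnp (down γ)).castSucc ∈ Endpts (up (down γ)) := by
              rw [hupd]
              exact mem_Endpts.mpr ⟨q, hqγ, hzq⟩
            exact (lastUnp_spec hne').1 (mem_Endpts_up.mp h2')
        refine ⟨Sum.inr ⟨down γ, hβTL, hβcard⟩, Subtype.ext ?_⟩
        show insert ((lastUnp (down γ)).castSucc, Fin.last (k + 1)) (up (down γ)) = α
        rw [hmax, hlow, hupd]
        have : (p₀.1, Fin.last (k + 1)) = p₀ := by
          rw [← hlast]
        rw [this, hγdef, Finset.insert_erase h0]


lemma card_zero (k : ℕ) :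
    Nat.card {α : Finset (Fin k × Fin k) // IsTLConfig α ∧ α.card = 0} = 1 := by
  rw [Nat.card_eq_one_iff_unique]
  refine ⟨⟨?_⟩, ⟨⟨∅, empty_TL, Finset.card_empty⟩⟩⟩
  rintro ⟨a, _, ha⟩ ⟨b, _, hb⟩
  rw [Finset.card_eq_zero] at ha hb
  apply Subtype.ext
  show a = b
  rw [ha, hb]

lemma card_big {k n : ℕ} (h : k < 2 * n) :
    Nat.card {α : Finset (Fin k × Fin k) // IsTLConfig α ∧ α.card = n} = 0 := by
  rw [Nat.card_eq_zero]
  left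
  constructor
  rintro ⟨a, hTL, hc⟩
  have := two_mul_card_le hTL
  omega

lemma aux : ∀ k n : ℕ, 2 * n ≤ k + 1 →
    (Nat.card {α : Finset (Fin k × Fin k) // IsTLConfig α ∧ α.card = n} : ℤ)
      = (k.choose n : ℤ) - (if n = 0 then 0 else (k.choose (n - 1) : ℤ)) := by
  intro k
  induction k with
  | zero =>
    intro n hn
    have : n = 0 := by omega
    subst this
    rw [card_zero]
    simp
  | succ k IH =>
    rintro (_ | m) hn
    · rw [card_zero]
      simp
    · by_cases hbig : k + 1 < 2 * (m + 1)
      · have hk : k + 1 = 2 * m + 1 := by omega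
        rw [card_big hbig]
        have hsymm : (k + 1).choose (m + 1) = (k + 1).choose m := by
          rw [hk, ← Nat.choose_symm (by omega : m + 1 ≤ 2 * m + 1)]
          congr 1
          omega
        simp [hsymm]
      · push_neg at hbig
        rcases k with _ | j
        · omega
        · rw [recur j (m + 1) (by omega) (by omega)]
          push_cast
          rw [IH (m + 1) (by omega), IH m (by omega)]
          rcases m with _ | l
          · simp [Nat.choose_one_right]
          · have hP1 : (j + 2).choose (l + 2) = (j + 1).choose (l + 1) + (j + 1).choose (l + 2) :=
              Nat.choose_succ_succ' (j + 1) (l + 1) ▸ by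
                rw [Nat.choose_succ_succ]
            have hP2 : (j + 2).choose (l + 1) = (j + 1).choose l + (j + 1).choose (l + 1) := by
              rw [Nat.choose_succ_succ]
            simp only [Nat.add_sub_cancel, if_neg (Nat.succ_ne_zero l),
              if_neg (Nat.succ_ne_zero (l + 1))]
            rw [hP1, hP2]
            push_cast
            ring

end TLaux

/-- The number of configurations of `n` non-crossing arcs on `k` vertices with no arc
spanning an unpaired vertex equals the ballot number `C(k, n) - C(k, n-1)`
(with `C(k, -1) = 0`), for `0 ≤ 2n ≤ k`. -/
theorem card_TLConfig {k n : ℕ} (h : 2 * n ≤ k) :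
    (Nat.card {α : Finset (Fin k × Fin k) // IsTLConfig α ∧ α.card = n} : ℤ) =
      (k.choose n : ℤ) - (if n = 0 then 0 else (k.choose (n - 1) : ℤ)) := by
  exact TLaux.aux k n (by omega)
end
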